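/- Let X : ℝ → ℝ be continuous with X(x) > 0 for all x, let σ be a one-parameter group of diffeomorphisms generated by X (σ(0,x) = x, σ(s,σ(t,x)) = σ(s+t,x), ∂σ/∂t(t,x) = X(σ(t,x))), and fix x₀ ∈ ℝ. Assume the orbit map t ↦ σ(t, x₀) is a bijection from ℝ onto ℝ. Let g : ℝ → ℝ be continuous such that the map t ↦ g(σ(t, x₀)) has compact support. Then lim_{h→0⁺} h ∑_{n∈ℤ} g(σ(nh, x₀)) = ∫_ℝ g(x)/X(x) dx. -/

import Mathlib

open MeasureTheory Filter

-- floor characterization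
lemma floor_mem_Ico {h t : ℝ} (hh : 0 < h) {n : ℤ} :
    t ∈ Set.Ico ((n : ℝ) * h) ((n + 1 : ℤ) * h) ↔ ⌊t / h⌋ = n := by
  rw [Int.floor_eq_iff, Set.mem_Ico]
  constructor
  · rintro ⟨h1, h2⟩
    refine ⟨(le_div_iff₀ hh).2 ?_, (div_lt_iff₀ hh).2 ?_⟩ <;> push_cast at h1 h2 ⊢ <;> linarith
  · rintro ⟨h1, h2⟩
    have a := (le_div_iff₀ hh).1 h1
    have b := (div_lt_iff₀ hh).1 h2
    push_cast at a b ⊢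
    exact ⟨a, b⟩

-- Riemann sums of a continuous compactly supported function converge to the integral
lemma riemann_sum_tendsto (f : ℝ → ℝ) (hf : Continuous f) (hsupp : HasCompactSupport f) :
    Tendsto (fun h : ℝ => h * ∑' n : ℤ, f ((n : ℝ) * h))
      (nhdsWithin 0 (Set.Ioi 0)) (nhds (∫ t : ℝ, f t)) := by
  obtain ⟨C, hC⟩ := hsupp.exists_bound_of_continuous hf
  obtain ⟨M, hM⟩ : ∃ M : ℝ, tsupport f ⊆ Set.Icc (-M) M := by
    obtain ⟨M, hM⟩ := hsupp.isBounded.subset_closedBall 0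
    exact ⟨M, by simpa [Real.closedBall_eq_Icc] using hM⟩
  have hfz : ∀ x : ℝ, x ∉ Set.Icc (-M) M → f x = 0 := fun x hx =>
    image_eq_zero_of_notMem_tsupport (fun h' => hx (hM h'))
  set F : ℝ → ℝ → ℝ := fun h t => f ((⌊t / h⌋ : ℝ) * h) with hF
  -- measurability
  have hmeas : ∀ h : ℝ, Measurable (F h) := by
    intro h
    exact hf.measurable.comp ((measurable_from_top.comp (Int.measurable_floor.comp (measurable_id.div_const h))).mul_const h)
  -- bound
  set bound : ℝ → ℝ := Set.indicator (Set.Icc (-(M+1)) (M+1)) (fun _ => C) with hbd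
  have hbound_int : Integrable bound := by
    rw [hbd, integrable_indicator_iff measurableSet_Icc]
    exact integrableOn_const measure_Icc_lt_top.ne
  have hCnn : 0 ≤ C := le_trans (norm_nonneg _) (hC 0)
  have hFle : ∀ h : ℝ, h ∈ Set.Ioc (0:ℝ) 1 → ∀ t, ‖F h t‖ ≤ bound t := by
    intro h ⟨hh0, hh1⟩ t
    by_cases ht : t ∈ Set.Icc (-(M+1)) (M+1)
    · rw [hbd, Set.indicator_of_mem ht]; exact hC _
    · rw [hbd, Set.indicator_of_notMem ht]
      have h1 : (⌊t / h⌋ : ℝ) * h ≤ t := by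
        have := Int.floor_le (t / h)
        calc (⌊t / h⌋ : ℝ) * h ≤ (t / h) * h := by nlinarith
        _ = t := by field_simp
      have h2 : t - h ≤ (⌊t / h⌋ : ℝ) * h := by
        have := Int.lt_floor_add_one (t / h)
        have : t / h * h ≤ ((⌊t / h⌋ : ℝ) + 1) * h := by nlinarith
        have ht' : t / h * h = t := by field_simp
        nlinarith
      simp only [Set.mem_Icc, not_and_or, not_le] at ht
      rw [hF]
      have hz : f ((⌊t / h⌋ : ℝ) * h) = 0 := by
        apply hfz
        intro hmem
        rcases ht with ht | ht
        · have := hmem.1; nlinarith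
        · have := hmem.2; nlinarith
      simp only [hz, norm_zero, le_refl]
  -- pointwise convergence
  have hptwise : ∀ t : ℝ, Tendsto (fun h : ℝ => F h t) (nhdsWithin 0 (Set.Ioi 0)) (nhds (f t)) := by
    intro t
    have harg : Tendsto (fun h : ℝ => (⌊t / h⌋ : ℝ) * h) (nhdsWithin 0 (Set.Ioi 0)) (nhds t) := by
      apply tendsto_of_tendsto_of_tendsto_of_le_of_le'
        (g := fun h : ℝ => t - h) (h := fun _ : ℝ => t)
      · have : Tendsto (fun h : ℝ => t - h) (nhds 0) (nhds (t - 0)) :=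
          (tendsto_const_nhds.sub tendsto_id)
        simpa using this.mono_left nhdsWithin_le_nhds
      · exact tendsto_const_nhds
      · filter_upwards [self_mem_nhdsWithin] with h (hh : 0 < h)
        have := Int.lt_floor_add_one (t / h)
        have h2 : t / h * h ≤ ((⌊t / h⌋ : ℝ) + 1) * h := by nlinarith
        have ht' : t / h * h = t := by field_simp
        nlinarith
      · filter_upwards [self_mem_nhdsWithin] with h (hh : 0 < h)
        have := Int.floor_le (t / h)
        calc (⌊t / h⌋ : ℝ) * h ≤ (t / h) * h := by nlinarith
        _ = t := by field_simp
    exact (hf.tendsto t).comp harg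
  -- integral identity for h > 0
  have hint : ∀ h : ℝ, 0 < h → ∫ t : ℝ, F h t = h * ∑' n : ℤ, f ((n : ℝ) * h) := by
    intro h hh
    have hInteg : Integrable (F h) := by
      refine Integrable.mono' (g := Set.indicator (Set.Icc (-(M+h)) (M+h)) (fun _ => C)) ?_ (hmeas h).aestronglyMeasurable ?_
      · rw [integrable_indicator_iff measurableSet_Icc]
        exact integrableOn_const measure_Icc_lt_top.ne
      · refine Filter.Eventually.of_forall fun t => ?_
        by_cases ht : (⌊t / h⌋ : ℝ) * h ∈ Set.Icc (-M) M
        · by_cases ht2 : t ∈ Set.Icc (-(M+h)) (M+h)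
          · rw [Set.indicator_of_mem ht2]; exact hC _
          · exfalso
            apply ht2
            have h1 : (⌊t / h⌋ : ℝ) * h ≤ t := by
              have := Int.floor_le (t / h)
              calc (⌊t / h⌋ : ℝ) * h ≤ (t / h) * h := by nlinarith
              _ = t := by field_simp
            have h2 : t - h ≤ (⌊t / h⌋ : ℝ) * h := by
              have := Int.lt_floor_add_one (t / h)
              have : t / h * h ≤ ((⌊t / h⌋ : ℝ) + 1) * h := by nlinarith
              have ht' : t / h * h = t := by field_simp
              nlinarith
            constructor <;> [nlinarith [ht.1]; nlinarith [ht.2]]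
        · have hz : f ((⌊t / h⌋ : ℝ) * h) = 0 := hfz _ ht
          simp only [hF, hz, norm_zero]
          exact Set.indicator_nonneg (fun _ _ => hCnn) t
    have hcover : (⋃ n : ℤ, Set.Ico ((n : ℝ) * h) (((n : ℤ) + 1 : ℤ) * h)) = Set.univ := by
      ext t
      simp only [Set.mem_iUnion, Set.mem_univ, iff_true]
      exact ⟨⌊t / h⌋, (floor_mem_Ico hh).2 rfl⟩
    have hdisj : Pairwise (Function.onFun Disjoint
        (fun n : ℤ => Set.Ico ((n : ℝ) * h) (((n : ℤ) + 1 : ℤ) * h))) := by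
      intro m n hmn
      rw [Function.onFun, Set.disjoint_left]
      intro t htm htn
      exact hmn (((floor_mem_Ico hh).1 htm).symm.trans ((floor_mem_Ico hh).1 htn))
    calc ∫ t : ℝ, F h t = ∫ t in ⋃ n : ℤ, Set.Ico ((n : ℝ) * h) (((n : ℤ) + 1 : ℤ) * h), F h t := by
          rw [hcover, setIntegral_univ]
      _ = ∑' n : ℤ, ∫ t in Set.Ico ((n : ℝ) * h) (((n : ℤ) + 1 : ℤ) * h), F h t := by
          refine integral_iUnion (fun n => measurableSet_Ico) hdisj ?_
          rw [hcover]
          exact hInteg.integrableOn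
      _ = ∑' n : ℤ, h * f ((n : ℝ) * h) := by
          congr 1
          ext n
          rw [setIntegral_congr_fun measurableSet_Ico
            (g := fun _ => f ((n : ℝ) * h)) ?_]
          · rw [setIntegral_const, Measure.real, Real.volume_Ico, smul_eq_mul]
            congr 1
            rw [ENNReal.toReal_ofReal]
            · push_cast; ring
            · push_cast; linarith
          · intro t ht
            have hfl : ⌊t / h⌋ = n := (floor_mem_Ico hh).1 ht
            simp only [hF, hfl]
      _ = h * ∑' n : ℤ, f ((n : ℝ) * h) := by rw [tsum_mul_left]
  -- DCT
  have hDCT : Tendsto (fun h : ℝ => ∫ t : ℝ, F h t) (nhdsWithin 0 (Set.Ioi 0))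
      (nhds (∫ t : ℝ, f t)) := by
    refine tendsto_integral_filter_of_dominated_convergence bound ?_ ?_ hbound_int ?_
    · exact Filter.Eventually.of_forall fun h => (hmeas h).aestronglyMeasurable
    · have : Set.Ioc (0:ℝ) 1 ∈ nhdsWithin (0:ℝ) (Set.Ioi 0) := by
        apply Ioc_mem_nhdsGT_of_mem
        constructor <;> norm_num
      filter_upwards [this] with h hh
      exact Filter.Eventually.of_forall (hFle h hh)
    · exact Filter.Eventually.of_forall hptwise
  refine hDCT.congr' ?_
  filter_upwards [self_mem_nhdsWithin] with h (hh : 0 < h)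
  exact (hint h hh)

/-- The discrete functional `ℏ ∑_{n∈ℤ} g(σ(nℏ,x₀))` converges, as
`ℏ → 0⁺`, to the continuous functional `∫ g(x)/X(x) dx`. -/
theorem statement7 (X : ℝ → ℝ) (σ : ℝ → ℝ → ℝ) (x₀ : ℝ) (g : ℝ → ℝ)
    (hX : Continuous X) (hXpos : ∀ x : ℝ, 0 < X x)
    (hσ0 : ∀ x : ℝ, σ 0 x = x)
    (hgrp : ∀ s t x : ℝ, σ s (σ t x) = σ (s + t) x)
    (hflow : ∀ t x : ℝ, HasDerivAt (fun s => σ s x) (X (σ t x)) t)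
    (horbit : Function.Bijective (fun t => σ t x₀))
    (hg : Continuous g)
    (hsupp : HasCompactSupport (fun t => g (σ t x₀))) :
    Tendsto (fun h : ℝ => h * ∑' n : ℤ, g (σ ((n : ℝ) * h) x₀))
      (nhdsWithin 0 (Set.Ioi 0)) (nhds (∫ x : ℝ, g x / X x)) := by
  set φ : ℝ → ℝ := fun t => σ t x₀ with hφ
  have hφderiv : ∀ t : ℝ, HasDerivAt φ (X (φ t)) t := fun t => hflow t x₀
  have hφcont : Continuous φ :=
    continuous_iff_continuousAt.2 fun t => (hφderiv t).continuousAt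
  have hgφcont : Continuous (fun t => g (φ t)) := hg.comp hφcont
  have key : (∫ x : ℝ, g x / X x) = ∫ t : ℝ, g (φ t) := by
    have himg : φ '' Set.univ = Set.univ := by
      rw [Set.image_univ]; exact horbit.2.range_eq
    have := integral_image_eq_integral_abs_deriv_smul (f := φ) (f' := fun t => X (φ t))
      MeasurableSet.univ (fun t _ => (hφderiv t).hasDerivWithinAt)
      (horbit.1.injOn) (fun x => g x / X x)
    rw [himg] at this
    rw [← setIntegral_univ (f := fun x => g x / X x), this, setIntegral_univ]
    congr 1
    ext t
    rw [abs_of_pos (hXpos _), smul_eq_mul, mul_comm, div_mul_cancel₀]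
    exact (hXpos _).ne'
  rw [key]
  exact riemann_sum_tendsto (fun t => g (φ t)) hgφcont hsupp
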